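/- The symmetrical sum σ(x, y) = x·y / (1 − x − y + 2·x·y) is a well-defined associative operation on the open unit interval: for all x, y, z ∈ (0,1), the denominator 1 − x − y + 2·x·y is strictly positive, σ(x, y) ∈ (0,1), and σ(σ(x, y), z) = σ(x, σ(y, z)). -/

import Mathlib

/-- The symmetrical sum `σ(x, y) = x·y / (1 − x − y + 2·x·y)`. -/
noncomputable def symSum (x y : ℝ) : ℝ := x * y / (1 - x - y + 2 * x * y)

lemma symSum_denom_pos {x y : ℝ} (hx : x ∈ Set.Ioo (0 : ℝ) 1)
    (hy : y ∈ Set.Ioo (0 : ℝ) 1) : 0 < 1 - x - y + 2 * x * y := by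
  obtain ⟨hx0, hx1⟩ := hx; obtain ⟨hy0, hy1⟩ := hy
  nlinarith [mul_pos hx0 hy0, mul_pos (sub_pos.2 hx1) (sub_pos.2 hy1)]

lemma symSum_mem {x y : ℝ} (hx : x ∈ Set.Ioo (0 : ℝ) 1)
    (hy : y ∈ Set.Ioo (0 : ℝ) 1) : symSum x y ∈ Set.Ioo (0 : ℝ) 1 := by
  have hd := symSum_denom_pos hx hy
  obtain ⟨hx0, hx1⟩ := hx; obtain ⟨hy0, hy1⟩ := hy
  rw [symSum]
  constructor
  · exact div_pos (mul_pos hx0 hy0) hd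
  · rw [div_lt_one hd]
    nlinarith [mul_pos (sub_pos.2 hx1) (sub_pos.2 hy1)]

lemma symSum_eq {x y z : ℝ} (hx : x ∈ Set.Ioo (0 : ℝ) 1)
    (hy : y ∈ Set.Ioo (0 : ℝ) 1) (hz : z ∈ Set.Ioo (0 : ℝ) 1) :
    symSum (symSum x y) z = x * y * z / ((1 - x) * (1 - y) * (1 - z) + x * y * z) := by
  have hd := symSum_denom_pos hx hy
  have hd2 := symSum_denom_pos (symSum_mem hx hy) hz
  have hE : (0:ℝ) < (1 - x) * (1 - y) * (1 - z) + x * y * z := by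
    obtain ⟨hx0, hx1⟩ := hx; obtain ⟨hy0, hy1⟩ := hy; obtain ⟨hz0, hz1⟩ := hz
    nlinarith [mul_pos (mul_pos (sub_pos.2 hx1) (sub_pos.2 hy1)) (sub_pos.2 hz1),
      mul_pos (mul_pos hx0 hy0) hz0]
  rw [symSum, symSum] at *
  rw [div_eq_div_iff hd2.ne' hE.ne']
  field_simp
  have hd' : (1 - x - y + x * y * 2) ≠ 0 := by linarith
  field_simp
  ring

theorem statement15 :
    ∀ x ∈ Set.Ioo (0 : ℝ) 1, ∀ y ∈ Set.Ioo (0 : ℝ) 1, ∀ z ∈ Set.Ioo (0 : ℝ) 1,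
      0 < 1 - x - y + 2 * x * y ∧ symSum x y ∈ Set.Ioo (0 : ℝ) 1 ∧
      symSum (symSum x y) z = symSum x (symSum y z) := by
  intro x hx y hy z hz
  refine ⟨symSum_denom_pos hx hy, symSum_mem hx hy, ?_⟩
  have h1 := symSum_eq hx hy hz
  have h2 : symSum x (symSum y z) = symSum (symSum z y) x := by
    rw [symSum, symSum, symSum, symSum]; ring_nf
  rw [h1, h2, symSum_eq hz hy hx]
  ring
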